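/- Let K be a field of characteristic 2 with a discrete valuation v : Kˣ → ℤ, and let a, b, γ ∈ Kˣ and an integer n ≥ 1 be such that v(a) is even and negative, v(b) is odd and negative, v(γ) = 0, and for every u ∈ Kˣ with v(u) = 0 one has v(u² + u + γ) = 0. Then for every x₀ ∈ K with g(x₀) ≠ 0, the valuation v(g(x₀)) is even, where g(x₀) = a^{-8n}·b²·x₀² + a^{-4n}·b·x₀ + a^{1-4n} + γ. (This is the local computation at the place 𝔭 in Lemma 3.3, showing the local invariant of the Brauer class vanishes there.) -/

import Mathlib

/-- A discrete valuation on a field `K`: a surjective group homomorphism `v : Kˣ → ℤ`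
(encoded as an integer-valued function on `K`, multiplicative and surjective on nonzero
elements) satisfying `v(x + y) ≥ min (v x) (v y)`. -/
structure DiscreteVal (K : Type*) [Field K] where
  /-- the underlying valuation function (its values at `0` are irrelevant) -/
  v : K → ℤ
  map_mul : ∀ x y : K, x ≠ 0 → y ≠ 0 → v (x * y) = v x + v y
  min_le_add : ∀ x y : K, x ≠ 0 → y ≠ 0 → x + y ≠ 0 → min (v x) (v y) ≤ v (x + y)
  surjective : ∀ m : ℤ, ∃ x : K, x ≠ 0 ∧ v x = m

/-- `f(x) = a^{-4n}·b·x² + x + a·b⁻¹`. -/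
noncomputable def fDV {K : Type*} [Field K] (a b : K) (n : ℤ) (x : K) : K :=
  a ^ (-(4 * n)) * b * x ^ 2 + x + a * b⁻¹

/-- `g(x) = a^{-8n}·b²·x² + a^{-4n}·b·x + a^{1-4n} + γ`. -/
noncomputable def gDV {K : Type*} [Field K] (a b γ : K) (n : ℤ) (x : K) : K :=
  a ^ (-(8 * n)) * b ^ 2 * x ^ 2 + a ^ (-(4 * n)) * b * x + a ^ (1 - 4 * n) + γ

namespace DiscreteVal
variable {K : Type*} [Field K] (w : DiscreteVal K)

lemma v_one' : w.v 1 = 0 := by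
  have h := w.map_mul 1 1 one_ne_zero one_ne_zero
  rw [mul_one] at h; omega

lemma v_inv' {x : K} (hx : x ≠ 0) : w.v x⁻¹ = - w.v x := by
  have h := w.map_mul x x⁻¹ hx (inv_ne_zero hx)
  rw [mul_inv_cancel₀ hx, w.v_one'] at h; omega

lemma v_pow' {x : K} (hx : x ≠ 0) (k : ℕ) : w.v (x ^ k) = k * w.v x := by
  induction k with
  | zero => simpa using w.v_one'
  | succ m ih =>
    rw [pow_succ, w.map_mul _ _ (pow_ne_zero _ hx) hx, ih]; push_cast; ring

lemma v_zpow' {x : K} (hx : x ≠ 0) (m : ℤ) : w.v (x ^ m) = m * w.v x := by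
  cases m with
  | ofNat k => rw [Int.ofNat_eq_coe, zpow_natCast, w.v_pow' hx]
  | negSucc k =>
    rw [zpow_negSucc, w.v_inv' (pow_ne_zero _ hx), w.v_pow' hx]
    push_cast [Int.negSucc_eq]; ring

lemma v_add_of_lt [CharP K 2] {x y : K} (hx : x ≠ 0) (hy : y ≠ 0)
    (h : w.v x < w.v y) : x + y ≠ 0 ∧ w.v (x + y) = w.v x := by
  have hne : x + y ≠ 0 := by
    intro h0
    have hxy : x = y := by
      have := eq_neg_of_add_eq_zero_left h0
      rwa [CharTwo.neg_eq] at this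
    rw [hxy] at h; exact lt_irrefl _ h
  refine ⟨hne, ?_⟩
  have h1 := w.min_le_add x y hx hy hne
  have h2 : (x + y) + y = x := by rw [add_assoc, CharTwo.add_self_eq_zero, add_zero]
  have h3 := w.min_le_add (x + y) y hne hy (by rw [h2]; exact hx)
  rw [h2] at h3
  omega

end DiscreteVal

/-- The local computation at the place `𝔭` in Lemma 3.3: under the stated conditions (in
particular, `u² + u + γ` is a unit for every unit `u`), `v(g(x₀))` is even for every `x₀`. -/
theorem val_g_even_at_p (K : Type*) [Field K] [CharP K 2] (w : DiscreteVal K)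
    (a b γ : K) (ha0 : a ≠ 0) (hb0 : b ≠ 0) (hγ0 : γ ≠ 0) (n : ℤ) (hn : 1 ≤ n)
    (haEven : Even (w.v a)) (haNeg : w.v a < 0)
    (hbOdd : Odd (w.v b)) (hbNeg : w.v b < 0)
    (hγ : w.v γ = 0)
    (hunit : ∀ u : K, u ≠ 0 → w.v u = 0 →
      u ^ 2 + u + γ ≠ 0 ∧ w.v (u ^ 2 + u + γ) = 0) :
    ∀ x₀ : K, gDV a b γ n x₀ ≠ 0 → Even (w.v (gDV a b γ n x₀)) := by
  intro x₀ hg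
  set s : K := a ^ (1 - 4 * n) with hs
  have hsne : s ≠ 0 := zpow_ne_zero _ ha0
  have hvs : 0 < w.v s := by
    rw [hs, w.v_zpow' ha0]
    have h1 : 1 - 4 * n ≤ -3 := by omega
    nlinarith
  set t : K := a ^ (-(4 * n)) * b * x₀ with ht
  have hsq : (a ^ (-(4 * n)) : K) ^ 2 = a ^ (-(8 * n)) := by
    rw [← zpow_natCast (a ^ (-(4 * n))) 2, ← zpow_mul]
    congr 1; ring
  have hgt : gDV a b γ n x₀ = t ^ 2 + t + s + γ := by
    simp only [gDV, ht, hs, ← hsq]; ring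
  by_cases ht0 : t = 0
  · have hgγ : gDV a b γ n x₀ = γ + s := by rw [hgt, ht0]; ring
    have h := w.v_add_of_lt hγ0 hsne (by rw [hγ]; exact hvs)
    rw [hgγ, h.2, hγ]; exact Even.zero
  · rcases lt_trichotomy (w.v t) 0 with hlt | heq | hgt0
    · -- v t < 0 : v g = 2 v t
      have hγs := w.v_add_of_lt hγ0 hsne (by rw [hγ]; exact hvs)
      have htγs := w.v_add_of_lt ht0 hγs.1 (by rw [hγs.2, hγ]; exact hlt)
      have ht2 : w.v (t ^ 2) = 2 * w.v t := by
        rw [w.v_pow' ht0]; push_cast; ring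
      have hfin := w.v_add_of_lt (pow_ne_zero 2 ht0) htγs.1
        (by rw [ht2, htγs.2]; omega)
      have hgeq : gDV a b γ n x₀ = t ^ 2 + (t + (γ + s)) := by rw [hgt]; ring
      rw [hgeq, hfin.2, ht2]
      exact ⟨w.v t, two_mul _⟩
    · -- v t = 0 : v g = 0
      obtain ⟨hne, hv0⟩ := hunit t ht0 heq
      have h := w.v_add_of_lt hne hsne (by rw [hv0]; exact hvs)
      have hgeq : gDV a b γ n x₀ = (t ^ 2 + t + γ) + s := by rw [hgt]; ring
      rw [hgeq, h.2, hv0]; exact Even.zero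
    · -- v t > 0 : v g = 0
      have ht2 : w.v (t ^ 2) = 2 * w.v t := by
        rw [w.v_pow' ht0]; push_cast; ring
      have htt := w.v_add_of_lt ht0 (pow_ne_zero 2 ht0) (by omega)
      by_cases hz : t + t ^ 2 + s = 0
      · have hgγ : gDV a b γ n x₀ = γ := by rw [hgt]; linear_combination hz
        rw [hgγ, hγ]; exact Even.zero
      · have hmin := w.min_le_add (t + t ^ 2) s htt.1 hsne hz
        have h := w.v_add_of_lt hγ0 hz
          (by rw [hγ]; rw [htt.2] at hmin; omega)
        have hgeq : gDV a b γ n x₀ = γ + (t + t ^ 2 + s) := by rw [hgt]; ring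
        rw [hgeq, h.2, hγ]; exact Even.zero
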